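/- Let A and B be positive definite d×d complex matrices. Then the product BA has positive real eigenvalues (it is similar to the positive definite matrix B^{1/2}AB^{1/2}), and the vector log λ↓(B) + log λ↑(A) is majorized by log λ(BA), which in turn is majorized by log λ↓(B) + log λ↓(A). Here log is applied entrywise. -/

import Mathlib

open Matrix Polynomial
open scoped ComplexOrder

/-- The vector `x` rearranged in non-increasing order. -/
noncomputable def sortDesc {d : ℕ} (x : Fin d → ℝ) : Fin d → ℝ :=
  fun i => x (Tuple.sort x i.rev)

/-- The vector `x` rearranged in non-decreasing order. -/
noncomputable def sortAsc {d : ℕ} (x : Fin d → ℝ) : Fin d → ℝ :=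
  fun i => x (Tuple.sort x i)

/-- `x` is submajorized by `y`. -/
noncomputable def Submajorizes {d : ℕ} (x y : Fin d → ℝ) : Prop :=
  ∀ k : Fin d, ∑ i ∈ Finset.Iic k, sortDesc x i ≤ ∑ i ∈ Finset.Iic k, sortDesc y i

/-- `x` is majorized by `y`. -/
noncomputable def Majorizes {d : ℕ} (x y : Fin d → ℝ) : Prop :=
  Submajorizes x y ∧ ∑ i, x i = ∑ i, y i

/-- The positive semidefinite square root of a positive semidefinite matrix
(the definition of `Matrix.PosSemidef.sqrt` in the older Mathlib, since removed). -/
noncomputable def Matrix.PosSemidef.sqrt {n : Type*} {𝕜 : Type*} [Fintype n] [RCLike 𝕜]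
    [DecidableEq n] {A : Matrix n n 𝕜} (hA : A.PosSemidef) : Matrix n n 𝕜 :=
  hA.1.eigenvectorUnitary.1 * diagonal ((↑) ∘ (√·) ∘ hA.1.eigenvalues) *
  (star hA.1.eigenvectorUnitary : Matrix n n 𝕜)

theorem Matrix.PosSemidef.posSemidef_sqrt {n : Type*} {𝕜 : Type*} [Fintype n] [RCLike 𝕜]
    [DecidableEq n] {A : Matrix n n 𝕜} (hA : A.PosSemidef) : hA.sqrt.PosSemidef := by
  unfold Matrix.PosSemidef.sqrt
  rw [Matrix.star_eq_conjTranspose]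
  refine Matrix.PosSemidef.mul_mul_conjTranspose_same ?_ _
  refine Matrix.posSemidef_diagonal_iff.mpr fun i => ?_
  simp only [Function.comp_apply]
  exact RCLike.ofReal_nonneg.mpr (Real.sqrt_nonneg _)

theorem Matrix.PosSemidef.sqrt_mul_self {n : Type*} {𝕜 : Type*} [Fintype n] [RCLike 𝕜]
    [DecidableEq n] {A : Matrix n n 𝕜} (hA : A.PosSemidef) : hA.sqrt * hA.sqrt = A := by
  unfold Matrix.PosSemidef.sqrt
  have hU : star (hA.1.eigenvectorUnitary : Matrix n n 𝕜) * hA.1.eigenvectorUnitary = 1 :=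
    Matrix.mem_unitaryGroup_iff'.mp hA.1.eigenvectorUnitary.2
  have hD : diagonal ((↑) ∘ (√·) ∘ hA.1.eigenvalues : n → 𝕜) *
      diagonal ((↑) ∘ (√·) ∘ hA.1.eigenvalues : n → 𝕜)
      = diagonal (RCLike.ofReal ∘ hA.1.eigenvalues) := by
    rw [diagonal_mul_diagonal]
    congr 1
    funext i
    simp only [Function.comp_apply]
    rw [← RCLike.ofReal_mul, Real.mul_self_sqrt (hA.eigenvalues_nonneg i)]
  conv_rhs => rw [hA.1.spectral_theorem, Unitary.conjStarAlgAut_apply]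
  rw [show ∀ U D V : Matrix n n 𝕜, U * D * V * (U * D * V) = U * (D * (V * U) * D) * V from
    fun U D V => by simp only [Matrix.mul_assoc], hU, mul_one, hD]

namespace GNL
variable {d : ℕ}

lemma monotone_sortAsc (x : Fin d → ℝ) : Monotone (sortAsc x) := Tuple.monotone_sort x

lemma sortDesc_eq (x : Fin d → ℝ) (i : Fin d) : sortDesc x i = sortAsc x i.rev := rfl

lemma antitone_sortDesc (x : Fin d → ℝ) : Antitone (sortDesc x) := by
  intro i j hij
  exact monotone_sortAsc x (by simpa [Fin.rev_le_rev] using hij)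

/-- multiset of values -/
noncomputable def mset (x : Fin d → ℝ) : Multiset ℝ := Finset.univ.val.map x

lemma mset_comp_perm (x : Fin d → ℝ) (σ : Equiv.Perm (Fin d)) : mset (x ∘ σ) = mset x := by
  unfold mset
  have h1 : Finset.univ.val.map (⇑σ) = Finset.univ.val := by
    have := Finset.map_univ_equiv σ
    rw [← this]; simp [Finset.map_val]
  calc Finset.univ.val.map (x ∘ σ) = (Finset.univ.val.map σ).map x := by
        rw [Multiset.map_map]
    _ = Finset.univ.val.map x := by rw [h1]

lemma mset_sortAsc (x : Fin d → ℝ) : mset (sortAsc x) = mset x :=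
  mset_comp_perm x (Tuple.sort x)

lemma mset_sortDesc (x : Fin d → ℝ) : mset (sortDesc x) = mset x := by
  have : sortDesc x = (sortAsc x) ∘ Fin.revPerm := by
    funext i; rfl
  rw [this, mset_comp_perm, mset_sortAsc]

lemma mset_eq_coe_ofFn (x : Fin d → ℝ) : mset x = (List.ofFn x : Multiset ℝ) := by
  unfold mset
  rw [Fin.univ_def]
  simp [List.ofFn_eq_map]

/-- monotone functions with same multiset agree -/
lemma monotone_eq_of_mset_eq {x y : Fin d → ℝ} (hx : Monotone x) (hy : Monotone y)
    (h : mset x = mset y) : x = y := by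
  rw [mset_eq_coe_ofFn, mset_eq_coe_ofFn] at h
  have hperm : (List.ofFn x).Perm (List.ofFn y) := Multiset.coe_eq_coe.mp h
  have := List.Perm.eq_of_sortedLE hx.sortedLE_ofFn hy.sortedLE_ofFn hperm
  exact List.ofFn_injective this

lemma sortAsc_eq_of_mset_eq {x y : Fin d → ℝ} (h : mset x = mset y) :
    sortAsc x = sortAsc y :=
  monotone_eq_of_mset_eq (monotone_sortAsc x) (monotone_sortAsc y)
    (by rw [mset_sortAsc, mset_sortAsc, h])

lemma sortDesc_eq_of_mset_eq {x y : Fin d → ℝ} (h : mset x = mset y) :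
    sortDesc x = sortDesc y := by
  funext i
  rw [sortDesc_eq, sortDesc_eq, sortAsc_eq_of_mset_eq h]

lemma sortAsc_eq_self_of_monotone {x : Fin d → ℝ} (hx : Monotone x) : sortAsc x = x :=
  monotone_eq_of_mset_eq (monotone_sortAsc x) hx (mset_sortAsc x)

lemma sortDesc_eq_self_of_antitone {x : Fin d → ℝ} (hx : Antitone x) : sortDesc x = x := by
  have h1 : Monotone (x ∘ Fin.revPerm) := by
    intro i j hij
    exact hx (by simpa [Fin.rev_le_rev] using hij)
  have h2 : sortAsc x = x ∘ Fin.revPerm :=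
    monotone_eq_of_mset_eq (monotone_sortAsc x) h1 (by rw [mset_sortAsc, mset_comp_perm])
  funext i
  rw [sortDesc_eq, h2]
  simp [Fin.rev_rev]


/-- the permutation with x ∘ descPerm = sortDesc x -/
noncomputable def descPerm (x : Fin d → ℝ) : Equiv.Perm (Fin d) :=
  Fin.revPerm.trans (Tuple.sort x)

lemma sortDesc_apply (x : Fin d → ℝ) (i : Fin d) : sortDesc x i = x (descPerm x i) := rfl

lemma prod_sortDesc (x : Fin d → ℝ) : ∏ i, sortDesc x i = ∏ i, x i := by
  simpa [sortDesc_apply] using Equiv.prod_comp (descPerm x) x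

lemma sum_sortDesc (x : Fin d → ℝ) : ∑ i, sortDesc x i = ∑ i, x i := by
  simpa [sortDesc_apply] using Equiv.sum_comp (descPerm x) x

lemma sum_sortAsc (x : Fin d → ℝ) : ∑ i, sortAsc x i = ∑ i, x i := by
  exact Equiv.sum_comp (Tuple.sort x) x

lemma sortDesc_pos {x : Fin d → ℝ} (hx : ∀ i, 0 < x i) (i : Fin d) : 0 < sortDesc x i := by
  rw [sortDesc_apply]; exact hx _

lemma sortAsc_pos {x : Fin d → ℝ} (hx : ∀ i, 0 < x i) (i : Fin d) : 0 < sortAsc x i := hx _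


lemma mset_comp (f : ℝ → ℝ) (x : Fin d → ℝ) : mset (f ∘ x) = (mset x).map f := by
  unfold mset; rw [Multiset.map_map]

noncomputable def Ncount (x : Fin d → ℝ) (t : ℝ) : ℕ := ((mset x).filter (fun a => t < a)).card

lemma Ncount_eq_card_filter (x : Fin d → ℝ) (t : ℝ) :
    Ncount x t = (Finset.univ.filter (fun i => t < x i)).card := by
  unfold Ncount mset
  rw [Multiset.filter_map, Multiset.card_map]
  rfl

lemma lt_iff_lt_Ncount {v : Fin d → ℝ} (hv : Antitone v) (t : ℝ) (i : Fin d) :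
    t < v i ↔ (i : ℕ) < Ncount v t := by
  rw [Ncount_eq_card_filter]
  set S := Finset.univ.filter (fun j => t < v j) with hS
  constructor
  · intro h
    have hsub : Finset.Iic i ⊆ S := by
      intro j hj
      simp only [hS, Finset.mem_filter, Finset.mem_univ, true_and]
      exact lt_of_lt_of_le h (hv (Finset.mem_Iic.mp hj))
    have := Finset.card_le_card hsub
    rw [Fin.card_Iic] at this
    omega
  · intro h
    by_contra hn
    have hsub : S ⊆ Finset.Iio i := by
      intro j hj
      simp only [hS, Finset.mem_filter] at hj
      rw [Finset.mem_Iio]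
      by_contra hji
      exact hn (lt_of_lt_of_le hj.2 (hv (le_of_not_gt hji)))
    have := Finset.card_le_card hsub
    rw [Fin.card_Iio] at this
    omega

lemma sortDesc_le_of_Ncount_le {x y : Fin d → ℝ} (h : ∀ t, Ncount x t ≤ Ncount y t) (i : Fin d) :
    sortDesc x i ≤ sortDesc y i := by
  by_contra hn
  push_neg at hn
  set t := sortDesc y i with ht
  have h1 : (i : ℕ) < Ncount (sortDesc x) t := by
    rw [← lt_iff_lt_Ncount (antitone_sortDesc x)]
    exact hn
  have h2 : ¬ ((i : ℕ) < Ncount (sortDesc y) t) := by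
    rw [← lt_iff_lt_Ncount (antitone_sortDesc y)]
    exact lt_irrefl _
  have e1 : Ncount (sortDesc x) t = Ncount x t := by unfold Ncount; rw [mset_sortDesc]
  have e2 : Ncount (sortDesc y) t = Ncount y t := by unfold Ncount; rw [mset_sortDesc]
  rw [e1] at h1; rw [e2] at h2
  exact h2 (lt_of_lt_of_le h1 (h t))

lemma sortDesc_smul {x : Fin d → ℝ} {c : ℝ} (hc : 0 ≤ c) :
    sortDesc (fun i => c * x i) = fun i => c * sortDesc x i := by
  have hanti : Antitone (fun i => c * sortDesc x i) := fun i j hij => by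
    exact mul_le_mul_of_nonneg_left (antitone_sortDesc x hij) hc
  have hm : mset (fun i => c * x i) = mset (fun i => c * sortDesc x i) := by
    have h1 : mset (fun i => c * x i) = (mset x).map (fun a => c * a) :=
      mset_comp (fun a => c * a) x
    have h2 : mset (fun i => c * sortDesc x i) = (mset (sortDesc x)).map (fun a => c * a) :=
      mset_comp (fun a => c * a) (sortDesc x)
    rw [h1, h2, mset_sortDesc]
  rw [sortDesc_eq_of_mset_eq hm, sortDesc_eq_self_of_antitone hanti]

lemma sortDesc_inv {x : Fin d → ℝ} (hx : ∀ i, 0 < x i) :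
    sortDesc (fun i => (x i)⁻¹) = fun i => (sortAsc x i)⁻¹ := by
  have hanti : Antitone (fun i => (sortAsc x i)⁻¹) := fun i j hij => by
    simpa using one_div_le_one_div_of_le (sortAsc_pos hx i) (monotone_sortAsc x hij)
  have hm : mset (fun i => (x i)⁻¹) = mset (fun i => (sortAsc x i)⁻¹) := by
    have h1 : mset (fun i => (x i)⁻¹) = (mset x).map (fun a => a⁻¹) := mset_comp _ x
    have h2 : mset (fun i => (sortAsc x i)⁻¹) = (mset (sortAsc x)).map (fun a => a⁻¹) :=
      mset_comp _ (sortAsc x)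
    have h3 : mset (sortAsc x) = mset x := by
      show mset (x ∘ (Tuple.sort x)) = mset x
      unfold mset
      rw [← Multiset.map_map]
      congr 1
      have := Finset.map_univ_equiv (Tuple.sort x)
      rw [← this]; simp [Finset.map_val]
    rw [h1, h2, h3]
  rw [sortDesc_eq_of_mset_eq hm, sortDesc_eq_self_of_antitone hanti]

lemma charpoly_conj {S M : Matrix (Fin d) (Fin d) ℂ} (hS : IsUnit S.det) :
    (S * M * S⁻¹).charpoly = M.charpoly := by
  have hinv : S * S⁻¹ = 1 := Matrix.mul_nonsing_inv S hS
  set RH : Matrix (Fin d) (Fin d) ℂ →+* Matrix (Fin d) (Fin d) ℂ[X] :=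
    (C : ℂ →+* ℂ[X]).mapMatrix with hRH
  have h1 : RH S * RH (S⁻¹) = 1 := by
    rw [← _root_.map_mul, hinv, _root_.map_one]
  have hcomm : ∀ A : Matrix (Fin d) (Fin d) ℂ[X],
      A * Matrix.scalar (Fin d) (X : ℂ[X]) = Matrix.scalar (Fin d) (X : ℂ[X]) * A :=
    fun A => (Matrix.scalar_commute (X : ℂ[X]) (fun r' => Commute.all _ _) A).symm
  have key : charmatrix (S * M * S⁻¹) = RH S * charmatrix M * RH (S⁻¹) := by
    unfold charmatrix
    rw [← hRH, _root_.map_mul, _root_.map_mul, mul_sub, sub_mul]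
    congr 1
    rw [hcomm (RH S), mul_assoc, h1, mul_one]
  rw [Matrix.charpoly, Matrix.charpoly, key, det_mul, det_mul, mul_right_comm,
    ← det_mul, h1, det_one, one_mul]

lemma charpoly_comm {N M : Matrix (Fin d) (Fin d) ℂ} (hN : IsUnit N.det) :
    (N * M).charpoly = (M * N).charpoly := by
  have : N * (M * N) * N⁻¹ = N * M := by
    rw [mul_assoc, mul_assoc, Matrix.mul_nonsing_inv N hN, mul_one]
  rw [← this, charpoly_conj hN]

lemma charpoly_diag (w : Fin d → ℂ) :
    (diagonal w).charpoly = ∏ i, (X - C (w i)) := by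
  rw [Matrix.charpoly_of_upperTriangular _ (Matrix.blockTriangular_diagonal w)]
  simp

-- unitary conj
lemma charpoly_unitary_conj {U D : Matrix (Fin d) (Fin d) ℂ} (hU : star U * U = 1) :
    (U * D * star U).charpoly = D.charpoly := by
  have hdet : IsUnit U.det := by
    apply isUnit_of_mul_isUnit_right (y := U.det) (x := (star U).det)
    rw [← det_mul, hU, det_one]
    exact isUnit_one
  rw [mul_assoc, charpoly_comm hdet, mul_assoc, hU, mul_one]

lemma charpoly_hermitian {M : Matrix (Fin d) (Fin d) ℂ} (hM : M.IsHermitian) :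
    M.charpoly = ∏ i, (X - C ((hM.eigenvalues i : ℝ) : ℂ)) := by
  have h := hM.spectral_theorem
  nth_rewrite 1 [h]
  rw [Unitary.conjStarAlgAut_apply, charpoly_unitary_conj, charpoly_diag]
  · rfl
  · exact Matrix.mem_unitaryGroup_iff'.mp (hM.eigenvectorUnitary).2


lemma prod_X_sub_C_inj {w v : Fin d → ℝ}
    (h : (∏ i, (X - C ((w i : ℝ) : ℂ))) = ∏ i, (X - C ((v i : ℝ) : ℂ))) :
    mset w = mset v := by
  have key : ∀ u : Fin d → ℝ,
      (∏ i, (X - C ((u i : ℝ) : ℂ))) =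
        ((Finset.univ.val.map (fun i => ((u i : ℝ) : ℂ))).map (fun a => X - C a)).prod := by
    intro u
    rw [Finset.prod_eq_multiset_prod, Multiset.map_map]
    rfl
  have h2 : (Finset.univ.val.map (fun i => ((w i : ℝ) : ℂ)))
      = (Finset.univ.val.map (fun i => ((v i : ℝ) : ℂ))) := by
    have := congrArg Polynomial.roots (by rw [← key w, ← key v]; exact h :
      ((Finset.univ.val.map (fun i => ((w i : ℝ) : ℂ))).map (fun a => X - C a)).prod
        = ((Finset.univ.val.map (fun i => ((v i : ℝ) : ℂ))).map (fun a => X - C a)).prod)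
    rwa [Polynomial.roots_multiset_prod_X_sub_C, Polynomial.roots_multiset_prod_X_sub_C] at this
  have h3 : (mset w).map (fun a : ℝ => (a : ℂ)) = (mset v).map (fun a : ℝ => (a : ℂ)) := by
    unfold mset
    rw [Multiset.map_map, Multiset.map_map]
    exact h2
  exact Multiset.map_injective Complex.ofReal_injective h3

lemma dot_transfer (U : Matrix (Fin d) (Fin d) ℂ) (x w : Fin d → ℂ) :
    star x ⬝ᵥ (U *ᵥ w) = star (star U *ᵥ x) ⬝ᵥ w := by
  rw [Matrix.star_mulVec, Matrix.dotProduct_mulVec]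
  congr 1
  rw [Matrix.star_eq_conjTranspose, conjTranspose_conjTranspose]

lemma dot_self_cast (y : Fin d → ℂ) :
    star y ⬝ᵥ y = ((∑ j, Complex.normSq (y j) : ℝ) : ℂ) := by
  push_cast
  simp only [dotProduct, Pi.star_apply]
  congr 1
  funext j
  rw [Complex.star_def, ← Complex.normSq_eq_conj_mul_self]

lemma norm_transfer {U : Matrix (Fin d) (Fin d) ℂ} (hU : U * star U = 1) (x : Fin d → ℂ) :
    ∑ j, Complex.normSq ((star U *ᵥ x) j) = ∑ j, Complex.normSq (x j) := by
  have h : star (star U *ᵥ x) ⬝ᵥ (star U *ᵥ x) = star x ⬝ᵥ x := by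
    rw [← dot_transfer]
    rw [Matrix.mulVec_mulVec, hU, Matrix.one_mulVec]
  rw [dot_self_cast, dot_self_cast] at h
  exact_mod_cast h

lemma quad_spectral {M : Matrix (Fin d) (Fin d) ℂ} (hM : M.IsHermitian) (x : Fin d → ℂ) :
    star x ⬝ᵥ M *ᵥ x =
      ((∑ j, hM.eigenvalues j *
        Complex.normSq ((star (hM.eigenvectorUnitary : Matrix (Fin d) (Fin d) ℂ) *ᵥ x) j) : ℝ) : ℂ) := by
  set U : Matrix (Fin d) (Fin d) ℂ := (hM.eigenvectorUnitary : Matrix (Fin d) (Fin d) ℂ) with hU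
  set c : Fin d → ℂ := star U *ᵥ x with hc
  have hspec := hM.spectral_theorem
  calc star x ⬝ᵥ M *ᵥ x
      = star x ⬝ᵥ ((U * diagonal (RCLike.ofReal ∘ hM.eigenvalues) * star U) *ᵥ x) := by
        rw [Unitary.conjStarAlgAut_apply] at hspec
        rw [hU, ← hspec]
    _ = star x ⬝ᵥ (U *ᵥ ((diagonal (RCLike.ofReal ∘ hM.eigenvalues)) *ᵥ (star U *ᵥ x))) := by
        rw [Matrix.mulVec_mulVec, Matrix.mulVec_mulVec]
    _ = star c ⬝ᵥ ((diagonal (RCLike.ofReal ∘ hM.eigenvalues)) *ᵥ c) := by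
        rw [dot_transfer]
    _ = ∑ j, ((hM.eigenvalues j : ℂ)) * (star (c j) * c j) := by
        simp only [dotProduct, Matrix.mulVec_diagonal, Pi.star_apply, Function.comp_apply]
        exact Finset.sum_congr rfl (fun j _ => mul_left_comm _ _ _)
    _ = ((∑ j, hM.eigenvalues j * Complex.normSq (c j) : ℝ) : ℂ) := by
        push_cast
        exact Finset.sum_congr rfl (fun j _ => by
          rw [Complex.star_def, ← Complex.normSq_eq_conj_mul_self])


lemma card_filter_le_of_psd {H K : Matrix (Fin d) (Fin d) ℂ} (hH : H.IsHermitian)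
    (hK : K.IsHermitian) (hPSD : (K - H).PosSemidef) (t : ℝ) :
    (Finset.univ.filter (fun j => t < hH.eigenvalues j)).card ≤
      (Finset.univ.filter (fun j => t < hK.eigenvalues j)).card := by
  classical
  set S := Finset.univ.filter (fun j => t < hH.eigenvalues j) with hS
  set S' := Finset.univ.filter (fun j => t < hK.eigenvalues j) with hS'
  have hUH1 : star (hH.eigenvectorUnitary : Matrix (Fin d) (Fin d) ℂ) *
      (hH.eigenvectorUnitary : Matrix (Fin d) (Fin d) ℂ) = 1 :=
    Matrix.mem_unitaryGroup_iff'.mp hH.eigenvectorUnitary.2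
  have hUH2 : (hH.eigenvectorUnitary : Matrix (Fin d) (Fin d) ℂ) *
      star (hH.eigenvectorUnitary : Matrix (Fin d) (Fin d) ℂ) = 1 :=
    Matrix.mem_unitaryGroup_iff.mp hH.eigenvectorUnitary.2
  have hUK2 : (hK.eigenvectorUnitary : Matrix (Fin d) (Fin d) ℂ) *
      star (hK.eigenvectorUnitary : Matrix (Fin d) (Fin d) ℂ) = 1 :=
    Matrix.mem_unitaryGroup_iff.mp hK.eigenvectorUnitary.2
  set E : Matrix (Fin d) {j // j ∈ S} ℂ :=
    Matrix.of (fun i j => if (j : Fin d) = i then 1 else 0) with hE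
  set F : Matrix {j // j ∈ S'} (Fin d) ℂ :=
    Matrix.of (fun i j => if (i : Fin d) = j then 1 else 0) with hF
  set T : Matrix {j // j ∈ S'} {j // j ∈ S} ℂ :=
    F * (star (hK.eigenvectorUnitary : Matrix (Fin d) (Fin d) ℂ) *
      ((hH.eigenvectorUnitary : Matrix (Fin d) (Fin d) ℂ) * E)) with hT
  have hinj : Function.Injective T.mulVecLin := by
    rw [← LinearMap.ker_eq_bot, LinearMap.ker_eq_bot']
    intro a ha
    simp only [Matrix.mulVecLin_apply] at ha
    by_contra hane
    obtain ⟨j0, hj0⟩ : ∃ j0, a j0 ≠ 0 := by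
      by_contra hall; push_neg at hall; exact hane (funext hall)
    set xe : Fin d → ℂ := E *ᵥ a with hxe_def
    set x : Fin d → ℂ := (hH.eigenvectorUnitary : Matrix (Fin d) (Fin d) ℂ) *ᵥ xe with hx_def
    have hxe : ∀ i : Fin d, xe i = if h : i ∈ S then a ⟨i, h⟩ else 0 := by
      intro i
      by_cases h : i ∈ S
      · rw [dif_pos h, hxe_def]
        show ∑ j : {j // j ∈ S}, (if (j : Fin d) = i then (1:ℂ) else 0) * a j = a ⟨i, h⟩
        rw [Fintype.sum_eq_single (⟨i, h⟩ : {j // j ∈ S})]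
        · simp
        · intro j hji
          rw [if_neg, zero_mul]
          exact fun hc => hji (Subtype.ext hc)
      · rw [dif_neg h, hxe_def]
        show ∑ j : {j // j ∈ S}, (if (j : Fin d) = i then (1:ℂ) else 0) * a j = 0
        apply Finset.sum_eq_zero
        intro j _
        rw [if_neg, zero_mul]
        exact fun hc => h (hc ▸ j.2)
    have hcH : star (hH.eigenvectorUnitary : Matrix (Fin d) (Fin d) ℂ) *ᵥ x = xe := by
      rw [hx_def, Matrix.mulVec_mulVec, hUH1, Matrix.one_mulVec]
    set c' : Fin d → ℂ := star (hK.eigenvectorUnitary : Matrix (Fin d) (Fin d) ℂ) *ᵥ x with hc'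
    have hc'0 : ∀ j : Fin d, j ∈ S' → c' j = 0 := by
      intro j hj
      have hTa : T *ᵥ a = F *ᵥ c' := by
        rw [hT, hc', hx_def, hxe_def]
        rw [← Matrix.mulVec_mulVec, ← Matrix.mulVec_mulVec, ← Matrix.mulVec_mulVec]
      have h1 : (F *ᵥ c') ⟨j, hj⟩ = 0 := by rw [← hTa, ha]; rfl
      have h2 : (F *ᵥ c') ⟨j, hj⟩ = c' j := by
        show ∑ i, (if j = i then (1:ℂ) else 0) * c' i = c' j
        simp
      rw [h2] at h1; exact h1
    have hqH := quad_spectral hH x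
    rw [hcH] at hqH
    have hqK := quad_spectral hK x
    rw [← hc'] at hqK
    set rH : ℝ := ∑ j, hH.eigenvalues j * Complex.normSq (xe j) with hrH
    set rK : ℝ := ∑ j, hK.eigenvalues j * Complex.normSq (c' j) with hrK
    set n2 : ℝ := ∑ j, Complex.normSq (xe j) with hn2
    have hnx : ∑ j, Complex.normSq (x j) = n2 := by
      rw [hn2, ← hcH]
      exact (norm_transfer hUH2 x).symm
    have hnc' : ∑ j, Complex.normSq (c' j) = n2 := by
      rw [hc', norm_transfer hUK2 x, hnx]
    have hrHgt : t * n2 < rH := by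
      rw [hn2, hrH, Finset.mul_sum]
      apply Finset.sum_lt_sum
      · intro j _
        by_cases h : j ∈ S
        · have : t < hH.eigenvalues j := (Finset.mem_filter.mp h).2
          exact mul_le_mul_of_nonneg_right this.le (Complex.normSq_nonneg _)
        · rw [hxe j, dif_neg h]
          simp
      · refine ⟨(j0 : Fin d), Finset.mem_univ _, ?_⟩
        have hxj0 : xe (j0 : Fin d) = a j0 := by
          rw [hxe (j0 : Fin d), dif_pos j0.2]
        have hpos : 0 < Complex.normSq (xe (j0 : Fin d)) := by
          rw [hxj0]; exact Complex.normSq_pos.mpr hj0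
        have htlt : t < hH.eigenvalues (j0 : Fin d) := (Finset.mem_filter.mp j0.2).2
        exact mul_lt_mul_of_pos_right htlt hpos
    have hrKle : rK ≤ t * n2 := by
      rw [← hnc', hrK, Finset.mul_sum]
      apply Finset.sum_le_sum
      intro j _
      by_cases h : j ∈ S'
      · rw [hc'0 j h]
        simp
      · have : ¬ t < hK.eigenvalues j := by
          intro hcon
          exact h (Finset.mem_filter.mpr ⟨Finset.mem_univ _, hcon⟩)
        exact mul_le_mul_of_nonneg_right (le_of_not_gt this) (Complex.normSq_nonneg _)
    have hpsd2 := hPSD.dotProduct_mulVec_nonneg x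
    rw [Matrix.sub_mulVec, dotProduct_sub, hqK, hqH] at hpsd2
    have hfin : rH ≤ rK := by
      have : (0:ℂ) ≤ ((rK - rH : ℝ) : ℂ) := by rw [Complex.ofReal_sub]; exact hpsd2
      have := Complex.zero_le_real.mp this
      linarith
    linarith
  have h1 := LinearMap.finrank_le_finrank_of_injective hinj
  rw [Module.finrank_fintype_fun_eq_card, Module.finrank_fintype_fun_eq_card] at h1
  simpa [Fintype.card_coe] using h1


lemma prod_comp_sortDesc {γ : Type} [CommMonoid γ] (x : Fin d → ℝ) (f : ℝ → γ) :
    ∏ i, f (sortDesc x i) = ∏ i, f (x i) := by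
  have h := Equiv.prod_comp (descPerm x) (fun i => f (x i))
  simpa [← sortDesc_apply] using h

lemma sum_comp_sortAsc (x : Fin d → ℝ) (f : ℝ → ℝ) :
    ∑ i, f (sortAsc x i) = ∑ i, f (x i) :=
  Equiv.sum_comp (Tuple.sort x) (fun i => f (x i))

lemma sum_comp_sortDesc (x : Fin d → ℝ) (f : ℝ → ℝ) :
    ∑ i, f (sortDesc x i) = ∑ i, f (x i) := by
  have h := Equiv.sum_comp (descPerm x) (fun i => f (x i))
  simpa [← sortDesc_apply] using h

lemma prod_sortAsc (x : Fin d → ℝ) : ∏ i, sortAsc x i = ∏ i, x i :=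
  Equiv.prod_comp (Tuple.sort x) x

lemma weyl {H K : Matrix (Fin d) (Fin d) ℂ} (hH : H.IsHermitian) (hK : K.IsHermitian)
    (hPSD : (K - H).PosSemidef) (i : Fin d) :
    sortDesc hH.eigenvalues i ≤ sortDesc hK.eigenvalues i :=
  sortDesc_le_of_Ncount_le (fun t => by
    rw [Ncount_eq_card_filter, Ncount_eq_card_filter]
    exact card_filter_le_of_psd hH hK hPSD t) i

lemma evD_eq_of_charpoly_w {M : Matrix (Fin d) (Fin d) ℂ} (hM : M.IsHermitian) {w : Fin d → ℝ}
    (h : M.charpoly = ∏ i, (X - C ((w i : ℝ) : ℂ))) :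
    sortDesc hM.eigenvalues = sortDesc w :=
  sortDesc_eq_of_mset_eq (prod_X_sub_C_inj ((charpoly_hermitian hM).symm.trans h))

lemma evD_eq_of_charpoly {M N : Matrix (Fin d) (Fin d) ℂ} (hM : M.IsHermitian)
    (hN : N.IsHermitian) (h : M.charpoly = N.charpoly) :
    sortDesc hM.eigenvalues = sortDesc hN.eigenvalues :=
  evD_eq_of_charpoly_w hM (h.trans (charpoly_hermitian hN))

lemma evD_eq_of_unitary_diag {M U : Matrix (Fin d) (Fin d) ℂ} (hM : M.IsHermitian)
    {w : Fin d → ℝ} (hU : star U * U = 1)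
    (heq : M = U * diagonal (fun j => ((w j : ℝ) : ℂ)) * star U) :
    sortDesc hM.eigenvalues = sortDesc w :=
  evD_eq_of_charpoly_w hM (by rw [heq, charpoly_unitary_conj hU, charpoly_diag])

lemma det_eq_prod_evD {X : Matrix (Fin d) (Fin d) ℂ} (hX : X.IsHermitian) :
    X.det = ((∏ i, sortDesc hX.eigenvalues i : ℝ) : ℂ) := by
  rw [hX.det_eq_prod_eigenvalues]
  push_cast
  exact (prod_comp_sortDesc hX.eigenvalues (fun a => ((a : ℝ) : ℂ))).symm


lemma smul_isHermitian {X : Matrix (Fin d) (Fin d) ℂ} (hX : X.IsHermitian) (c : ℝ) :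
    ((c : ℂ) • X).IsHermitian := by
  unfold Matrix.IsHermitian
  rw [conjTranspose_smul, hX.eq, Complex.star_def, Complex.conj_ofReal]

lemma evD_smul {X : Matrix (Fin d) (Fin d) ℂ} (hX : X.IsHermitian) {c : ℝ} (hc : 0 ≤ c)
    (hcX : ((c : ℂ) • X).IsHermitian) :
    sortDesc hcX.eigenvalues = fun i => c * sortDesc hX.eigenvalues i := by
  have hU1 : star (hX.eigenvectorUnitary : Matrix (Fin d) (Fin d) ℂ) *
      (hX.eigenvectorUnitary : Matrix (Fin d) (Fin d) ℂ) = 1 :=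
    Matrix.mem_unitaryGroup_iff'.mp hX.eigenvectorUnitary.2
  have heq2 : (c : ℂ) • X = (hX.eigenvectorUnitary : Matrix (Fin d) (Fin d) ℂ) *
      diagonal (fun j => ((c * hX.eigenvalues j : ℝ) : ℂ)) *
      star (hX.eigenvectorUnitary : Matrix (Fin d) (Fin d) ℂ) := by
    have hD : (c : ℂ) • diagonal (RCLike.ofReal ∘ hX.eigenvalues : Fin d → ℂ)
        = diagonal (fun j => ((c * hX.eigenvalues j : ℝ) : ℂ)) := by
      ext i j
      rcases eq_or_ne i j with h | h
      · subst h
        simp only [Matrix.smul_apply, Matrix.diagonal_apply_eq, Function.comp_apply]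
        push_cast
        simp [Complex.ofReal_mul]
      · simp [Matrix.diagonal_apply_ne _ h]
    nth_rewrite 1 [hX.spectral_theorem]
    rw [Unitary.conjStarAlgAut_apply, ← smul_mul_assoc, ← mul_smul_comm, hD]
  rw [evD_eq_of_unitary_diag hcX hU1 heq2, sortDesc_smul hc]

lemma ML {P Q M : Matrix (Fin d) (Fin d) ℂ} (hP : P.PosDef) (hQ : Q.PosDef) (hM : M.PosDef)
    (heq : M = hP.posSemidef.sqrt * Q * hP.posSemidef.sqrt) (s : Finset (Fin d)) :
    ∏ i ∈ s, sortDesc hM.1.eigenvalues i ≤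
      (∏ i ∈ s, sortDesc hP.1.eigenvalues i) *
        ∏ j ∈ Finset.univ.filter (fun j : Fin d => (j : ℕ) < s.card),
          sortDesc hQ.1.eigenvalues j := by
  classical
  by_cases hs0 : s.card = 0
  · have hse : s = ∅ := Finset.card_eq_zero.mp hs0
    subst hse
    simp
  have hm1 : 1 ≤ s.card := Nat.pos_of_ne_zero hs0
  have hmd : s.card ≤ d := by simpa using s.card_le_univ
  set m := s.card with hm
  set evM := sortDesc hM.1.eigenvalues with hevM
  set evP := sortDesc hP.1.eigenvalues with hevP
  set evQ := sortDesc hQ.1.eigenvalues with hevQ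
  set idx : Fin d := ⟨m - 1, by omega⟩ with hidx
  set c := evQ idx with hc
  have hc0 : 0 < c := sortDesc_pos (fun i => hQ.eigenvalues_pos i) idx
  set R := hP.posSemidef.sqrt with hR
  have hRherm : R.IsHermitian := hP.posSemidef.posSemidef_sqrt.1
  have hRR : R * R = P := hP.posSemidef.sqrt_mul_self
  set UQ : Matrix (Fin d) (Fin d) ℂ := (hQ.1.eigenvectorUnitary : Matrix (Fin d) (Fin d) ℂ)
    with hUQ
  set w := hQ.1.eigenvalues with hw
  have hUQ1 : star UQ * UQ = 1 := Matrix.mem_unitaryGroup_iff'.mp hQ.1.eigenvectorUnitary.2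
  have hUQ2 : UQ * star UQ = 1 := Matrix.mem_unitaryGroup_iff.mp hQ.1.eigenvectorUnitary.2
  set Qh : Matrix (Fin d) (Fin d) ℂ :=
    UQ * diagonal (fun j => ((max (w j) c : ℝ) : ℂ)) * star UQ with hQh
  have hspecQ : Q = UQ * diagonal (RCLike.ofReal ∘ w) * star UQ := hQ.1.spectral_theorem
  have hdiagsub : ∀ v : Fin d → ℝ,
      (Matrix.diagonal (fun j => ((max (w j) c : ℝ) : ℂ)) - diagonal (fun j => ((v j : ℝ) : ℂ)))
        = diagonal (fun j => ((max (w j) c - v j : ℝ) : ℂ)) := by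
    intro v
    rw [Matrix.diagonal_sub]
    congr 1
    funext j
    push_cast
    ring
  have hdiagpsd : ∀ v : Fin d → ℝ, (∀ j, v j ≤ max (w j) c) →
      (Matrix.diagonal (fun j => ((max (w j) c - v j : ℝ) : ℂ))).PosSemidef := by
    intro v hv
    refine Matrix.posSemidef_diagonal_iff.mpr fun j => ?_
    rw [Complex.zero_le_real]
    linarith [hv j]
  have PSD1 : (Qh - Q).PosSemidef := by
    have h1 : Qh - Q = UQ * diagonal (fun j => ((max (w j) c - w j : ℝ) : ℂ)) * UQᴴ := by
      rw [hQh, hspecQ, ← Matrix.star_eq_conjTranspose, ← sub_mul, ← mul_sub]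
      congr 2
      exact hdiagsub w
    rw [h1]
    exact (hdiagpsd w (fun j => le_max_left _ _)).mul_mul_conjTranspose_same UQ
  have PSD2 : (Qh - (c : ℂ) • 1).PosSemidef := by
    have hci : (c : ℂ) • (1 : Matrix (Fin d) (Fin d) ℂ)
        = diagonal (fun _ : Fin d => ((c : ℝ) : ℂ)) := by
      ext i j
      rcases eq_or_ne i j with h | h
      · subst h
        simp
      · simp [Matrix.diagonal_apply_ne _ h, Matrix.one_apply_ne h]
    have h0 : UQ * diagonal (fun _ : Fin d => ((c : ℝ) : ℂ)) * star UQ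
        = (c : ℂ) • (1 : Matrix (Fin d) (Fin d) ℂ) := by
      rw [← hci, mul_smul_comm, mul_one, smul_mul_assoc, hUQ2]
    have h1 : Qh - (c : ℂ) • 1 = UQ * diagonal (fun j => ((max (w j) c - c : ℝ) : ℂ)) * UQᴴ := by
      rw [hQh, ← h0, ← Matrix.star_eq_conjTranspose, ← sub_mul, ← mul_sub,
        hdiagsub (fun _ => c)]
    rw [h1]
    exact (hdiagpsd (fun _ => c) (fun j => le_max_right _ _)).mul_mul_conjTranspose_same UQ
  set M2 : Matrix (Fin d) (Fin d) ℂ := R * Qh * R with hM2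
  have conjR : ∀ X : Matrix (Fin d) (Fin d) ℂ, X.PosSemidef → (R * X * R).PosSemidef := by
    intro X hX
    have := hX.mul_mul_conjTranspose_same R
    rwa [hRherm.eq] at this
  have hM2M : (M2 - M).PosSemidef := by
    have h1 : M2 - M = R * (Qh - Q) * R := by
      rw [hM2, heq, mul_sub, sub_mul]
    rw [h1]; exact conjR _ PSD1
  have hM2cP : (M2 - (c : ℂ) • P).PosSemidef := by
    have h1 : M2 - (c : ℂ) • P = R * (Qh - (c : ℂ) • 1) * R := by
      rw [hM2, mul_sub, sub_mul]
      congr 1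
      rw [mul_smul_comm, mul_one, smul_mul_assoc, hRR]
    rw [h1]; exact conjR _ PSD2
  have hM2herm : M2.IsHermitian := by
    have h1 := hM2M.1
    have h2 : M2 = (M2 - M) + M := by abel
    rw [h2]; exact h1.add hM.1
  have hcPherm : ((c : ℂ) • P).IsHermitian := smul_isHermitian hP.1 c
  set evM2 := sortDesc hM2herm.eigenvalues with hevM2
  have Weyl1 : ∀ i, evM i ≤ evM2 i := fun i => weyl hM.1 hM2herm hM2M i
  have Weyl2 : ∀ i, c * evP i ≤ evM2 i := by
    intro i
    have h1 := weyl hcPherm hM2herm hM2cP i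
    rwa [evD_smul hP.1 hc0.le hcPherm] at h1
  -- determinant identities
  have hUdet : UQ.det * (star UQ).det = 1 := by rw [← det_mul, hUQ2, det_one]
  have hdetQh : Qh.det = ((∏ j, max (w j) c : ℝ) : ℂ) := by
    have e1 : Qh.det = UQ.det * (diagonal (fun j => ((max (w j) c : ℝ) : ℂ))).det
        * (star UQ).det := by
      rw [hQh, det_mul, det_mul]
    rw [e1, det_diagonal]
    have e2 : UQ.det * (∏ j, ((max (w j) c : ℝ) : ℂ)) * (star UQ).det
        = (∏ j, ((max (w j) c : ℝ) : ℂ)) * (UQ.det * (star UQ).det) := by ring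
    rw [e2, hUdet, mul_one]
    push_cast
    rfl
  have hdetM2 : M2.det = P.det * Qh.det := by
    have e1 : M2.det = R.det * Qh.det * R.det := by rw [hM2, det_mul, det_mul]
    have e2 : R.det * Qh.det * R.det = (R.det * R.det) * Qh.det := by ring
    rw [e1, e2, ← det_mul, hRR]
  have hkey : ∏ i, evM2 i = (∏ i, evP i) * ∏ j, max (w j) c := by
    have h1 : ((∏ i, evM2 i : ℝ) : ℂ) = (((∏ i, evP i) * ∏ j, max (w j) c : ℝ) : ℂ) := by
      rw [hevM2, hevP, ← det_eq_prod_evD hM2herm, hdetM2, det_eq_prod_evD hP.1, hdetQh]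
      push_cast
      ring
    exact_mod_cast h1
  set Pm := Finset.univ.filter (fun j : Fin d => (j : ℕ) < m) with hPm
  have hPmIic : Pm = Finset.Iic idx := by
    ext j
    simp only [hPm, Finset.mem_filter, Finset.mem_univ, true_and, Finset.mem_Iic, Fin.le_def,
      hidx]
    omega
  have hPmcard : Pm.card = m := by
    rw [hPmIic, Fin.card_Iic]
    simp only [hidx]
    omega
  have hmaxprod : (∏ j, max (w j) c) = (∏ j ∈ Pm, evQ j) * c ^ (d - m) := by
    have e1 : (∏ j, max (w j) c) = ∏ j, max (evQ j) c := by
      rw [hevQ]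
      exact (prod_comp_sortDesc w (fun a => max a c)).symm
    have e2 : ∏ j ∈ Pm, max (evQ j) c = ∏ j ∈ Pm, evQ j := by
      refine Finset.prod_congr rfl fun j hj => ?_
      have hji : j ≤ idx := by
        have : (j : ℕ) < m := (Finset.mem_filter.mp hj).2
        rw [Fin.le_def]
        simp only [hidx]
        omega
      exact max_eq_left (le_trans (le_of_eq hc) (antitone_sortDesc _ hji))
    have hcardnot : (Finset.univ.filter (fun j : Fin d => ¬ ((j : ℕ) < m))).card = d - m := by
      have h1 := Finset.card_filter_add_card_filter_not
        (s := (Finset.univ : Finset (Fin d))) (p := fun j : Fin d => (j : ℕ) < m)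
      rw [← hPm] at h1
      rw [hPmcard] at h1
      simp only [Finset.card_univ, Fintype.card_fin] at h1
      omega
    have e3 : ∏ j ∈ Finset.univ.filter (fun j : Fin d => ¬ ((j : ℕ) < m)), max (evQ j) c
        = c ^ (d - m) := by
      have : ∀ j ∈ Finset.univ.filter (fun j : Fin d => ¬ ((j : ℕ) < m)),
          max (evQ j) c = c := by
        intro j hj
        have hji : idx ≤ j := by
          have : ¬ ((j : ℕ) < m) := (Finset.mem_filter.mp hj).2
          rw [Fin.le_def]
          simp only [hidx]
          omega
        exact max_eq_right (le_trans (antitone_sortDesc _ hji) (le_of_eq hc.symm))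
      rw [Finset.prod_congr rfl this, Finset.prod_const, hcardnot]
    calc (∏ j, max (w j) c) = ∏ j, max (evQ j) c := e1
      _ = (∏ j ∈ Pm, max (evQ j) c) *
            ∏ j ∈ Finset.univ.filter (fun j : Fin d => ¬ ((j : ℕ) < m)), max (evQ j) c := by
          rw [Finset.prod_filter_mul_prod_filter_not]
      _ = (∏ j ∈ Pm, evQ j) * c ^ (d - m) := by rw [e2, e3]
  -- final chain
  have hevMpos : ∀ i, 0 < evM i := fun i => sortDesc_pos (fun j => hM.eigenvalues_pos j) i
  have hevPpos : ∀ i, 0 < evP i := fun i => sortDesc_pos (fun j => hP.eigenvalues_pos j) i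
  have hevM2pos : ∀ i, 0 < evM2 i := fun i => lt_of_lt_of_le (mul_pos hc0 (hevPpos i)) (Weyl2 i)
  have step1 : ∏ i ∈ s, evM i ≤ ∏ i ∈ s, evM2 i :=
    Finset.prod_le_prod (fun i _ => (hevMpos i).le) (fun i _ => Weyl1 i)
  set X := ∏ i ∈ sᶜ, (c * evP i) with hXdef
  have hXpos : 0 < X := Finset.prod_pos fun i _ => mul_pos hc0 (hevPpos i)
  have step2 : (∏ i ∈ s, evM2 i) * X ≤ ∏ i, evM2 i := by
    rw [← Finset.prod_mul_prod_compl s evM2]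
    exact mul_le_mul_of_nonneg_left
      (Finset.prod_le_prod (fun i _ => (mul_pos hc0 (hevPpos i)).le) (fun i _ => Weyl2 i))
      (Finset.prod_nonneg fun i _ => (hevM2pos i).le)
  have hXeq : X = c ^ (d - m) * ∏ i ∈ sᶜ, evP i := by
    rw [hXdef, Finset.prod_mul_distrib, Finset.prod_const, Finset.card_compl, Fintype.card_fin]
  have hT : (∏ i, evM2 i) = ((∏ i ∈ s, evP i) * ∏ j ∈ Pm, evQ j) * X := by
    rw [hkey, hmaxprod, hXeq, ← Finset.prod_mul_prod_compl s evP]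
    ring
  have hfinal : (∏ i ∈ s, evM2 i) ≤ (∏ i ∈ s, evP i) * ∏ j ∈ Pm, evQ j := by
    apply le_of_mul_le_mul_right _ hXpos
    rw [← hT]
    exact step2
  exact step1.trans hfinal

-- new helpers
lemma posdef_conj {A : Matrix (Fin d) (Fin d) ℂ} (hA : A.PosDef)
    {S : Matrix (Fin d) (Fin d) ℂ} (hS : IsUnit S.det) : (Sᴴ * A * S).PosDef := by
  refine Matrix.PosDef.of_dotProduct_mulVec_pos ?_ ?_
  · unfold Matrix.IsHermitian
    rw [conjTranspose_mul, conjTranspose_mul, conjTranspose_conjTranspose, hA.1.eq,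
      Matrix.mul_assoc]
  · intro x hx
    have hSx : S *ᵥ x ≠ 0 := by
      have hinj : Function.Injective (S.mulVec) :=
        Matrix.mulVec_injective_iff_isUnit.mpr (isUnit_iff_isUnit_det S |>.mpr hS)
      intro h0
      apply hx
      have : S *ᵥ x = S *ᵥ 0 := by rw [h0, Matrix.mulVec_zero]
      exact hinj this
    have key : star x ⬝ᵥ (Sᴴ * A * S) *ᵥ x = star (S *ᵥ x) ⬝ᵥ A *ᵥ (S *ᵥ x) := by
      rw [← Matrix.mulVec_mulVec, ← Matrix.mulVec_mulVec]
      rw [show (Sᴴ : Matrix (Fin d) (Fin d) ℂ) = star S from rfl]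
      rw [dot_transfer (star S) x (A *ᵥ (S *ᵥ x)), star_star]
    rw [key]
    exact hA.dotProduct_mulVec_pos hSx

lemma sum_log_le_sum_log {s t : Finset (Fin d)} {u v : Fin d → ℝ}
    (hu : ∀ i, 0 < u i) (hv : ∀ j, 0 < v j)
    (h : ∏ i ∈ s, u i ≤ ∏ j ∈ t, v j) :
    ∑ i ∈ s, Real.log (u i) ≤ ∑ j ∈ t, Real.log (v j) := by
  rw [← Real.log_prod (s := s) (f := u) (fun i _ => (hu i).ne'),
    ← Real.log_prod (s := t) (f := v) (fun j _ => (hv j).ne')]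
  exact (Real.log_le_log_iff (Finset.prod_pos fun i _ => hu i)
    (Finset.prod_pos fun j _ => hv j)).mpr h

lemma filter_lt_card_Iic (k : Fin d) :
    Finset.univ.filter (fun j : Fin d => (j : ℕ) < (Finset.Iic k).card) = Finset.Iic k := by
  ext j
  simp only [Finset.mem_filter, Finset.mem_univ, true_and, Finset.mem_Iic, Fin.card_Iic,
    Fin.le_def]
  omega


end GNL

open GNL in
set_option maxHeartbeats 2000000 in
theorem gnl_log_majorization_product (d : ℕ) (A B : Matrix (Fin d) (Fin d) ℂ)
    (hA : A.PosDef) (hB : B.PosDef) :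
    (∃ S : Matrix (Fin d) (Fin d) ℂ, IsUnit S.det ∧
      B * A = S * (hB.posSemidef.sqrt * A * hB.posSemidef.sqrt) * S⁻¹) ∧
    ∃ μ : Fin d → ℝ, (∀ i, 0 < μ i) ∧ Antitone μ ∧
      (B * A).charpoly = ∏ i, (X - C (μ i : ℂ)) ∧
      Majorizes
        (fun i => Real.log (sortDesc hB.isHermitian.eigenvalues i)
          + Real.log (sortAsc hA.isHermitian.eigenvalues i))
        (fun i => Real.log (μ i)) ∧
      Majorizes (fun i => Real.log (μ i))
        (fun i => Real.log (sortDesc hB.isHermitian.eigenvalues i)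
          + Real.log (sortDesc hA.isHermitian.eigenvalues i)) := by
  classical
  have hRherm : (hB.posSemidef.sqrt).IsHermitian := hB.posSemidef.posSemidef_sqrt.1
  set R := hB.posSemidef.sqrt with hRdef
  have hRR : R * R = B := hB.posSemidef.sqrt_mul_self
  have hRdet : IsUnit R.det := by
    have hdetB : B.det ≠ 0 := hB.det_pos.ne'
    have hne : R.det ≠ 0 := by
      intro h
      apply hdetB
      rw [← hRR, det_mul, h, mul_zero]
    exact hne.isUnit
  set C0 : Matrix (Fin d) (Fin d) ℂ := R * A * R with hC0def
  have hC : C0.PosDef := by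
    have h := posdef_conj hA hRdet
    rw [hRherm.eq] at h
    exact h
  constructor
  · refine ⟨R, hRdet, ?_⟩
    have h1 : R * (R * A * R) * R⁻¹ = R * R * A * (R * R⁻¹) := by
      simp only [Matrix.mul_assoc]
    rw [h1, Matrix.mul_nonsing_inv _ hRdet, mul_one, hRR]
  · set μ := sortDesc hC.1.eigenvalues with hμdef
    have hμpos : ∀ i, 0 < μ i := fun i => sortDesc_pos (fun j => hC.eigenvalues_pos j) i
    have hμanti : Antitone μ := antitone_sortDesc _
    set evB := sortDesc hB.isHermitian.eigenvalues with hevB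
    set evA := sortDesc hA.isHermitian.eigenvalues with hevA
    set asA := sortAsc hA.isHermitian.eigenvalues with hasA
    have hevBpos : ∀ i, 0 < evB i := fun i => sortDesc_pos (fun j => hB.eigenvalues_pos j) i
    have hevApos : ∀ i, 0 < evA i := fun i => sortDesc_pos (fun j => hA.eigenvalues_pos j) i
    have hasApos : ∀ i, 0 < asA i := fun i => sortAsc_pos (fun j => hA.eigenvalues_pos j) i
    have hlogμanti : Antitone (fun i => Real.log (μ i)) := fun i j hij =>
      (Real.log_le_log_iff (hμpos j) (hμpos i)).mpr (hμanti hij)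
    have hC0charB : (B * A).charpoly = C0.charpoly := by
      have hBA : B * A = R * (R * A) := by rw [← hRR, Matrix.mul_assoc]
      rw [hBA, charpoly_comm hRdet]
    have hdetC : C0.det = B.det * A.det := by
      have e1 : C0.det = R.det * A.det * R.det := by rw [hC0def, det_mul, det_mul]
      have e2 : R.det * A.det * R.det = R.det * R.det * A.det := by ring
      rw [e1, e2, ← det_mul, hRR]
    have hprodμ : (∏ i, μ i) = (∏ i, evB i) * (∏ i, evA i) := by
      have h1 : ((∏ i, μ i : ℝ) : ℂ) = (((∏ i, evB i) * (∏ i, evA i) : ℝ) : ℂ) := by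
        rw [hμdef, hevB, hevA, ← det_eq_prod_evD hC.1, hdetC,
          det_eq_prod_evD hB.isHermitian, det_eq_prod_evD hA.isHermitian]
        push_cast
        ring
      exact_mod_cast h1
    refine ⟨μ, hμpos, hμanti, ?_, ?_, ?_⟩
    · rw [hC0charB, charpoly_hermitian hC.1]
      rw [hμdef]
      exact (prod_comp_sortDesc hC.1.eigenvalues (fun a => X - C ((a : ℝ) : ℂ))).symm
    · -- lower majorization
      have hsqCherm : (hC.posSemidef.sqrt).IsHermitian := hC.posSemidef.posSemidef_sqrt.1
      set sC := hC.posSemidef.sqrt with hsCdef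
      have hsCsq : sC * sC = C0 := hC.posSemidef.sqrt_mul_self
      have hsCdet : IsUnit sC.det := by
        have hne : sC.det ≠ 0 := by
          intro h
          apply hC.det_pos.ne'
          rw [← hsCsq, det_mul, h, mul_zero]
        exact hne.isUnit
      have hsCidet : IsUnit (sC⁻¹).det := sC.isUnit_nonsing_inv_det hsCdet
      set Y := sC⁻¹ * B * sC⁻¹ with hYdef
      have hsCiherm : (sC⁻¹).IsHermitian := hsqCherm.inv
      have hY : Y.PosDef := by
        have h := posdef_conj hB hsCidet
        rw [hsCiherm.eq] at h
        exact h
      have hYeq : sC * Y * sC = B := by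
        have h1 : sC * (sC⁻¹ * B * sC⁻¹) * sC = sC * sC⁻¹ * B * (sC⁻¹ * sC) := by
          simp only [Matrix.mul_assoc]
        rw [hYdef, h1, Matrix.mul_nonsing_inv _ hsCdet, Matrix.nonsing_inv_mul _ hsCdet,
          one_mul, mul_one]
      have hsYherm : (hY.posSemidef.sqrt).IsHermitian := hY.posSemidef.posSemidef_sqrt.1
      set sY := hY.posSemidef.sqrt with hsYdef
      have hsYsq : sY * sY = Y := hY.posSemidef.sqrt_mul_self
      have hsYdet : IsUnit sY.det := by
        have hne : sY.det ≠ 0 := by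
          intro h
          apply hY.det_pos.ne'
          rw [← hsYsq, det_mul, h, mul_zero]
        exact hne.isUnit
      set M' := sY * C0 * sY with hM'def
      have hM' : M'.PosDef := by
        have h := posdef_conj hC hsYdet
        rw [hsYherm.eq] at h
        exact h
      have hcharM' : M'.charpoly = B.charpoly := by
        calc M'.charpoly = (sY * (C0 * sY)).charpoly := by rw [hM'def, Matrix.mul_assoc]
          _ = ((C0 * sY) * sY).charpoly := charpoly_comm hsYdet
          _ = (C0 * Y).charpoly := by rw [Matrix.mul_assoc, hsYsq]
          _ = (sC * (sC * Y)).charpoly := by rw [← hsCsq, Matrix.mul_assoc]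
          _ = ((sC * Y) * sC).charpoly := charpoly_comm hsCdet
          _ = B.charpoly := by rw [hYeq]
      have hevM'B : sortDesc hM'.1.eigenvalues = evB := by
        rw [hevB]
        exact evD_eq_of_charpoly hM'.1 hB.isHermitian hcharM'
      set αA := hA.isHermitian.eigenvalues with hαA
      have hαApos : ∀ i, 0 < αA i := fun i => hA.eigenvalues_pos i
      set UA : Matrix (Fin d) (Fin d) ℂ :=
        (hA.isHermitian.eigenvectorUnitary : Matrix (Fin d) (Fin d) ℂ) with hUAdef
      have hUA1 : star UA * UA = 1 :=
        Matrix.mem_unitaryGroup_iff'.mp hA.isHermitian.eigenvectorUnitary.2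
      have hUA2 : UA * star UA = 1 :=
        Matrix.mem_unitaryGroup_iff.mp hA.isHermitian.eigenvectorUnitary.2
      have hAinv : A⁻¹ = UA * diagonal (fun j => (((αA j)⁻¹ : ℝ) : ℂ)) * star UA := by
        apply Matrix.inv_eq_right_inv
        nth_rewrite 1 [hA.isHermitian.spectral_theorem]
        have key : UA * diagonal (RCLike.ofReal ∘ αA) * star UA *
            (UA * diagonal (fun j => (((αA j)⁻¹ : ℝ) : ℂ)) * star UA)
            = UA * (diagonal (RCLike.ofReal ∘ αA) *
              diagonal (fun j => (((αA j)⁻¹ : ℝ) : ℂ))) * star UA := by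
          have h1 : UA * diagonal (RCLike.ofReal ∘ αA) * star UA *
              (UA * diagonal (fun j => (((αA j)⁻¹ : ℝ) : ℂ)) * star UA)
              = UA * (diagonal (RCLike.ofReal ∘ αA) *
                ((star UA * UA) * (diagonal (fun j => (((αA j)⁻¹ : ℝ) : ℂ)) * star UA))) := by
            simp only [Matrix.mul_assoc]
          rw [h1, hUA1, one_mul]
          simp only [Matrix.mul_assoc]
        rw [Unitary.conjStarAlgAut_apply, key]
        have hDD : diagonal (RCLike.ofReal ∘ αA) *
            diagonal (fun j => (((αA j)⁻¹ : ℝ) : ℂ)) = (1 : Matrix (Fin d) (Fin d) ℂ) := by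
          rw [Matrix.diagonal_mul_diagonal, ← Matrix.diagonal_one]
          refine congrArg Matrix.diagonal (funext fun j => ?_)
          show ((αA j : ℝ) : ℂ) * (((αA j)⁻¹ : ℝ) : ℂ) = 1
          have hne : (αA j : ℝ) ≠ 0 := (hαApos j).ne'
          push_cast
          field_simp
        rw [hDD, mul_one, hUA2]
      have hcharY : Y.charpoly = ∏ i, (X - C ((((αA i)⁻¹ : ℝ)) : ℂ)) := by
        have c1 : Y.charpoly = (B * (sC⁻¹ * sC⁻¹)).charpoly := by
          calc Y.charpoly = (sC⁻¹ * (B * sC⁻¹)).charpoly := by rw [hYdef, Matrix.mul_assoc]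
            _ = ((B * sC⁻¹) * sC⁻¹).charpoly := charpoly_comm hsCidet
            _ = (B * (sC⁻¹ * sC⁻¹)).charpoly := by rw [Matrix.mul_assoc]
        have c2 : sC⁻¹ * sC⁻¹ = C0⁻¹ := by rw [← Matrix.mul_inv_rev, hsCsq]
        have c3 : B * C0⁻¹ = R * (A⁻¹ * R⁻¹) := by
          have e1 : C0⁻¹ = R⁻¹ * (A⁻¹ * R⁻¹) := by
            rw [hC0def, Matrix.mul_inv_rev, Matrix.mul_inv_rev]
          rw [e1, ← hRR]
          calc R * R * (R⁻¹ * (A⁻¹ * R⁻¹)) = R * ((R * R⁻¹) * (A⁻¹ * R⁻¹)) := by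
                simp only [Matrix.mul_assoc]
            _ = R * (A⁻¹ * R⁻¹) := by rw [Matrix.mul_nonsing_inv _ hRdet, one_mul]
        have c4 : (R * (A⁻¹ * R⁻¹)).charpoly = A⁻¹.charpoly := by
          rw [charpoly_comm hRdet, Matrix.mul_assoc, Matrix.nonsing_inv_mul _ hRdet, mul_one]
        rw [c1, c2, c3, c4, hAinv, charpoly_unitary_conj hUA1, charpoly_diag]
      have hevY : sortDesc hY.1.eigenvalues = fun i => (asA i)⁻¹ := by
        rw [evD_eq_of_charpoly_w hY.1 hcharY, sortDesc_inv hαApos, hasA, hαA]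
      constructor
      · intro k
        rw [sortDesc_eq_self_of_antitone hlogμanti]
        set f := fun i => Real.log (evB i) + Real.log (asA i) with hf
        set s := (Finset.Iic k).image (descPerm f) with hsdef
        have hscard : s.card = (Finset.Iic k).card :=
          Finset.card_image_of_injective _ (Equiv.injective _)
        have hLHS : ∑ i ∈ Finset.Iic k, sortDesc f i = ∑ i ∈ s, f i := by
          rw [hsdef, Finset.sum_image (fun a _ b _ h => (descPerm f).injective h)]
          exact Finset.sum_congr rfl fun i _ => sortDesc_apply f i
        rw [hLHS]
        have hML := ML hY hC hM' (by rw [hM'def, hsYdef]) s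
        rw [hevM'B, hevY, ← hμdef] at hML
        have hfilter : Finset.univ.filter (fun j : Fin d => (j : ℕ) < s.card)
            = Finset.Iic k := by
          rw [hscard]
          exact filter_lt_card_Iic k
        rw [hfilter] at hML
        have hprodineq : ∏ i ∈ s, (evB i * asA i) ≤ ∏ i ∈ Finset.Iic k, μ i := by
          rw [Finset.prod_mul_distrib]
          have hpos : (0:ℝ) < ∏ i ∈ s, asA i := Finset.prod_pos fun i _ => hasApos i
          have h2 : (∏ i ∈ s, (asA i)⁻¹) = (∏ i ∈ s, asA i)⁻¹ := by
            rw [Finset.prod_inv_distrib]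
          rw [h2] at hML
          calc (∏ i ∈ s, evB i) * ∏ i ∈ s, asA i
              ≤ ((∏ i ∈ s, asA i)⁻¹ * ∏ i ∈ Finset.Iic k, μ i) * ∏ i ∈ s, asA i :=
                mul_le_mul_of_nonneg_right hML hpos.le
            _ = ∏ i ∈ Finset.Iic k, μ i := by field_simp
        have hlog := sum_log_le_sum_log
          (fun i => mul_pos (hevBpos i) (hasApos i)) hμpos hprodineq
        refine le_trans (le_of_eq ?_) hlog
        refine Finset.sum_congr rfl fun i _ => ?_
        rw [hf, Real.log_mul (hevBpos i).ne' (hasApos i).ne']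
      · -- total sums equal (lower)
        have hprodasA : (∏ i, asA i) = ∏ i, evA i := by
          rw [hasA, hevA, prod_sortAsc]
          exact (prod_comp_sortDesc hA.isHermitian.eigenvalues id).symm
        calc ∑ i, (Real.log (evB i) + Real.log (asA i))
            = (∑ i, Real.log (evB i)) + ∑ i, Real.log (asA i) := Finset.sum_add_distrib
          _ = Real.log (∏ i, evB i) + Real.log (∏ i, asA i) := by
              rw [Real.log_prod fun i _ => (hevBpos i).ne',
                Real.log_prod fun i _ => (hasApos i).ne']
          _ = Real.log ((∏ i, evB i) * ∏ i, asA i) := by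
              rw [Real.log_mul (Finset.prod_pos fun i _ => hevBpos i).ne'
                (Finset.prod_pos fun i _ => hasApos i).ne']
          _ = Real.log (∏ i, μ i) := by rw [hprodasA, ← hprodμ]
          _ = ∑ i, Real.log (μ i) := Real.log_prod fun i _ => (hμpos i).ne'
    · -- upper majorization
      constructor
      · intro k
        have hganti : Antitone (fun i => Real.log (evB i) + Real.log (evA i)) := by
          intro i j hij
          exact add_le_add
            ((Real.log_le_log_iff (hevBpos j) (hevBpos i)).mpr (antitone_sortDesc _ hij))
            ((Real.log_le_log_iff (hevApos j) (hevApos i)).mpr (antitone_sortDesc _ hij))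
        rw [sortDesc_eq_self_of_antitone hlogμanti, sortDesc_eq_self_of_antitone hganti]
        have hML := ML hB hA hC (by rw [hC0def, hRdef]) (Finset.Iic k)
        rw [filter_lt_card_Iic k, ← hμdef, ← hevB, ← hevA] at hML
        have hprodineq : ∏ i ∈ Finset.Iic k, μ i ≤ ∏ i ∈ Finset.Iic k, (evB i * evA i) := by
          rw [Finset.prod_mul_distrib]
          exact hML
        have hlog := sum_log_le_sum_log hμpos
          (fun i => mul_pos (hevBpos i) (hevApos i)) hprodineq
        refine le_trans hlog (le_of_eq ?_)
        refine Finset.sum_congr rfl fun i _ => ?_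
        rw [Real.log_mul (hevBpos i).ne' (hevApos i).ne']
      · calc ∑ i, Real.log (μ i) = Real.log (∏ i, μ i) :=
            (Real.log_prod fun i _ => (hμpos i).ne').symm
          _ = Real.log ((∏ i, evB i) * ∏ i, evA i) := by rw [hprodμ]
          _ = Real.log (∏ i, evB i) + Real.log (∏ i, evA i) := by
              rw [Real.log_mul (Finset.prod_pos fun i _ => hevBpos i).ne'
                (Finset.prod_pos fun i _ => hevApos i).ne']
          _ = (∑ i, Real.log (evB i)) + ∑ i, Real.log (evA i) := by
              rw [Real.log_prod fun i _ => (hevBpos i).ne',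
                Real.log_prod fun i _ => (hevApos i).ne']
          _ = ∑ i, (Real.log (evB i) + Real.log (evA i)) := Finset.sum_add_distrib.symm
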